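/- Regard 𝓔 as a function of (d₁₂, d₂₃, d₃₁). At the equilateral point d₁₂ = d₂₃ = d₃₁ = d > 0 with angular momentum satisfying H² = I_H²/d³ (I_H evaluated at this point), the second partial derivative ∂²𝓔/∂d_ij² equals (m_i m_j/(d³ I_H)) [ (m_i m_j − 3 m_k (m_i + m_j)) d² − 3 I_S ] for each pair {i, j} with complementary index k. Moreover, if 0 < m₃ ≤ m₂ ≤ m₁ then m₂ m₃ − 3 m₁ (m₂ + m₃) < 0, so ∂²𝓔/∂d₂₃² < 0; hence the Hessian of 𝓔 at the Lagrange orbital configuration is never positive definite, i.e., the Lagrange orbital configurations are always energetically unstable. -/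

import Mathlib

/-- Moment of inertia as a function of the three mutual distances. -/
noncomputable def IH3 (m1 m2 m3 IS d12 d23 d31 : ℝ) : ℝ :=
  m1 * m2 * d12 ^ 2 + m2 * m3 * d23 ^ 2 + m3 * m1 * d31 ^ 2 + IS

/-- The amended potential `𝓔 = H²/(2 I_H) + U` as a function of the three
mutual distances. -/
noncomputable def amended3 (m1 m2 m3 IS H d12 d23 d31 : ℝ) : ℝ :=
  H ^ 2 / (2 * IH3 m1 m2 m3 IS d12 d23 d31)
    - (m1 * m2 / d12 + m2 * m3 / d23 + m3 * m1 / d31)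

lemma lo_deriv1 (a c k H : ℝ) (ha : 0 < a) (hc : 0 < c) {x : ℝ} (hx : x ≠ 0) :
    HasDerivAt (fun y : ℝ => H ^ 2 / (2 * (a * y ^ 2 + c)) - (a / y + k))
      (a / x ^ 2 - H ^ 2 * a * x / (a * x ^ 2 + c) ^ 2) x := by
  have hden : (2 * (a * x ^ 2 + c)) ≠ 0 := by positivity
  have h1 : HasDerivAt (fun y : ℝ => 2 * (a * y ^ 2 + c)) (2 * (a * (2 * x))) x := by
    have : HasDerivAt (fun y : ℝ => a * y ^ 2 + c) (a * (2 * x)) x := by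
      simpa using ((hasDerivAt_pow 2 x).const_mul a).add_const c
    simpa using this.const_mul 2
  have h2 := (hasDerivAt_const x (H ^ 2)).div h1 hden
  have h3 : HasDerivAt (fun y : ℝ => a / y + k) (-a / x ^ 2) x := by
    have := (hasDerivAt_const x a).div (hasDerivAt_id x) hx
    simpa using this.add_const k
  have h4 := h2.sub h3
  have h4' : HasDerivAt (fun y : ℝ => H ^ 2 / (2 * (a * y ^ 2 + c)) - (a / y + k)) _ x := h4
  convert h4' using 1
  have hpx : (a * x ^ 2 + c) ≠ 0 := by positivity
  field_simp
  ring

lemma lo_second_key (a c k H d : ℝ) (ha : 0 < a) (hc : 0 < c) (hd : 0 < d)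
    (hH : H ^ 2 = (a * d ^ 2 + c) ^ 2 / d ^ 3) :
    deriv (deriv (fun x : ℝ => H ^ 2 / (2 * (a * x ^ 2 + c)) - (a / x + k))) d
      = a / (d ^ 3 * (a * d ^ 2 + c)) * (a * d ^ 2 - 3 * c) := by
  have hev : deriv (fun x : ℝ => H ^ 2 / (2 * (a * x ^ 2 + c)) - (a / x + k))
      =ᶠ[nhds d] (fun x => a / x ^ 2 - H ^ 2 * a * x / (a * x ^ 2 + c) ^ 2) := by
    filter_upwards [eventually_ne_nhds hd.ne'] with x hx
    exact (lo_deriv1 a c k H ha hc hx).deriv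
  rw [hev.deriv_eq]
  have hpd : (a * d ^ 2 + c) ≠ 0 := by positivity
  have hA : HasDerivAt (fun x : ℝ => a / x ^ 2) (-(2 * a) / d ^ 3) d := by
    have := (hasDerivAt_const d a).div (hasDerivAt_pow 2 d) (pow_ne_zero 2 hd.ne')
    have this' : HasDerivAt (fun x : ℝ => a / x ^ 2) _ d := this
    convert this' using 1
    field_simp
    ring
  have hnum : HasDerivAt (fun x : ℝ => H ^ 2 * a * x) (H ^ 2 * a) d := by
    simpa using (hasDerivAt_id d).const_mul (H ^ 2 * a)
  have hden : HasDerivAt (fun x : ℝ => (a * x ^ 2 + c) ^ 2)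
      ((2 : ℕ) * (a * d ^ 2 + c) ^ 1 * (a * (2 * d))) d := by
    have h0 : HasDerivAt (fun x : ℝ => a * x ^ 2 + c) (a * (2 * d)) d := by
      simpa using ((hasDerivAt_pow 2 d).const_mul a).add_const c
    exact h0.pow 2
  have hB := hnum.div hden (pow_ne_zero 2 hpd)
  have h := hA.sub hB
  have h' : HasDerivAt (fun x => a / x ^ 2 - H ^ 2 * a * x / (a * x ^ 2 + c) ^ 2) _ d := h
  rw [h'.deriv, hH]
  field_simp
  ring

/-- At the Lagrange orbital configuration (`d₁₂ = d₂₃ = d₃₁ = d`,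
`H² = I_H²/d³`) the diagonal second partials of `𝓔` are
`∂²𝓔/∂d_ij² = (m_i m_j/(d³ I_H))[(m_i m_j − 3 m_k(m_i+m_j))d² − 3 I_S]`;
if `0 < m₃ ≤ m₂ ≤ m₁` then `m₂m₃ − 3m₁(m₂+m₃) < 0`, so `∂²𝓔/∂d₂₃² < 0` and
the Hessian of `𝓔` there is never positive definite: the Lagrange orbital
configurations are always energetically unstable. -/
theorem lagrange_orbital_unstable
    (m1 m2 m3 IS H d : ℝ)
    (hm1 : 0 < m1) (hm2 : 0 < m2) (hm3 : 0 < m3) (hIS : 0 < IS) (hd : 0 < d)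
    (hH : 0 ≤ H)
    (hequil : H ^ 2 = (IH3 m1 m2 m3 IS d d d) ^ 2 / d ^ 3) :
    (deriv (deriv (fun x => amended3 m1 m2 m3 IS H x d d)) d =
        m1 * m2 / (d ^ 3 * IH3 m1 m2 m3 IS d d d) *
          ((m1 * m2 - 3 * m3 * (m1 + m2)) * d ^ 2 - 3 * IS)) ∧
    (deriv (deriv (fun x => amended3 m1 m2 m3 IS H d x d)) d =
        m2 * m3 / (d ^ 3 * IH3 m1 m2 m3 IS d d d) *
          ((m2 * m3 - 3 * m1 * (m2 + m3)) * d ^ 2 - 3 * IS)) ∧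
    (deriv (deriv (fun x => amended3 m1 m2 m3 IS H d d x)) d =
        m3 * m1 / (d ^ 3 * IH3 m1 m2 m3 IS d d d) *
          ((m3 * m1 - 3 * m2 * (m3 + m1)) * d ^ 2 - 3 * IS)) ∧
    (m3 ≤ m2 → m2 ≤ m1 →
      m2 * m3 - 3 * m1 * (m2 + m3) < 0 ∧
      deriv (deriv (fun x => amended3 m1 m2 m3 IS H d x d)) d < 0 ∧
      ∀ M : Matrix (Fin 3) (Fin 3) ℝ,
        M 1 1 = deriv (deriv (fun x => amended3 m1 m2 m3 IS H d x d)) d →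
        ¬ M.PosDef) := by
  have key1 : deriv (deriv (fun x => amended3 m1 m2 m3 IS H x d d)) d =
      m1 * m2 / (d ^ 3 * IH3 m1 m2 m3 IS d d d) *
        ((m1 * m2 - 3 * m3 * (m1 + m2)) * d ^ 2 - 3 * IS) := by
    have hf : (fun x => amended3 m1 m2 m3 IS H x d d)
        = fun x : ℝ => H ^ 2 / (2 * ((m1 * m2) * x ^ 2 + (m2 * m3 * d ^ 2 + m3 * m1 * d ^ 2 + IS)))
            - ((m1 * m2) / x + (m2 * m3 / d + m3 * m1 / d)) := by
      funext x; unfold amended3 IH3; ring_nf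
    have hH' : H ^ 2 = ((m1 * m2) * d ^ 2 + (m2 * m3 * d ^ 2 + m3 * m1 * d ^ 2 + IS)) ^ 2 / d ^ 3 := by
      rw [hequil]; unfold IH3; ring_nf
    rw [hf, lo_second_key _ _ _ _ _ (by positivity) (by positivity) hd hH']
    unfold IH3; ring
  have key2 : deriv (deriv (fun x => amended3 m1 m2 m3 IS H d x d)) d =
      m2 * m3 / (d ^ 3 * IH3 m1 m2 m3 IS d d d) *
        ((m2 * m3 - 3 * m1 * (m2 + m3)) * d ^ 2 - 3 * IS) := by
    have hf : (fun x => amended3 m1 m2 m3 IS H d x d)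
        = fun x : ℝ => H ^ 2 / (2 * ((m2 * m3) * x ^ 2 + (m1 * m2 * d ^ 2 + m3 * m1 * d ^ 2 + IS)))
            - ((m2 * m3) / x + (m1 * m2 / d + m3 * m1 / d)) := by
      funext x; unfold amended3 IH3; ring_nf
    have hH' : H ^ 2 = ((m2 * m3) * d ^ 2 + (m1 * m2 * d ^ 2 + m3 * m1 * d ^ 2 + IS)) ^ 2 / d ^ 3 := by
      rw [hequil]; unfold IH3; ring_nf
    rw [hf, lo_second_key _ _ _ _ _ (by positivity) (by positivity) hd hH']
    unfold IH3; ring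
  have key3 : deriv (deriv (fun x => amended3 m1 m2 m3 IS H d d x)) d =
      m3 * m1 / (d ^ 3 * IH3 m1 m2 m3 IS d d d) *
        ((m3 * m1 - 3 * m2 * (m3 + m1)) * d ^ 2 - 3 * IS) := by
    have hf : (fun x => amended3 m1 m2 m3 IS H d d x)
        = fun x : ℝ => H ^ 2 / (2 * ((m3 * m1) * x ^ 2 + (m1 * m2 * d ^ 2 + m2 * m3 * d ^ 2 + IS)))
            - ((m3 * m1) / x + (m1 * m2 / d + m2 * m3 / d)) := by
      funext x; unfold amended3 IH3; ring_nf
    have hH' : H ^ 2 = ((m3 * m1) * d ^ 2 + (m1 * m2 * d ^ 2 + m2 * m3 * d ^ 2 + IS)) ^ 2 / d ^ 3 := by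
      rw [hequil]; unfold IH3; ring_nf
    rw [hf, lo_second_key _ _ _ _ _ (by positivity) (by positivity) hd hH']
    unfold IH3; ring
  refine ⟨key1, key2, key3, fun h32 h21 => ?_⟩
  have hbr : m2 * m3 - 3 * m1 * (m2 + m3) < 0 := by nlinarith
  have hIpos : 0 < IH3 m1 m2 m3 IS d d d := by unfold IH3; positivity
  have hneg : deriv (deriv (fun x => amended3 m1 m2 m3 IS H d x d)) d < 0 := by
    rw [key2]
    apply mul_neg_of_pos_of_neg (by positivity)
    nlinarith
  refine ⟨hbr, hneg, fun M hM hPD => ?_⟩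
  have hx : (Pi.single 1 1 : Fin 3 → ℝ) ≠ 0 := by
    simp [Function.ne_iff]
  have hpos := hPD.dotProduct_mulVec_pos hx
  have : (0 : ℝ) < M 1 1 := by
    simpa [Matrix.mulVec, dotProduct, Fin.sum_univ_three, Pi.single_apply] using hpos
  rw [hM] at this
  linarith
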